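/- The IWAE bound is monotonically non-decreasing in the number of importance samples: L_IWAE(K+1) ≥ L_IWAE(K) for all K ≥ 1. -/
import Mathlib

open MeasureTheory Finset

section aux
variable {α : Type*} [MeasurableSpace α]

/-- Dropping coordinate `j` is measure preserving from `π^{K+1}` to `π^K`. -/
lemma drop_measurePreserving (μ : Measure α) [IsProbabilityMeasure μ] (K : ℕ)
    (j : Fin (K + 1)) :
    MeasurePreserving (fun (z : Fin (K + 1) → α) (i : Fin K) => z (j.succAbove i))
      (Measure.pi fun _ => μ) (Measure.pi fun _ => μ) := by
  have h1 := measurePreserving_piFinSuccAbove (fun _ : Fin (K + 1) => μ) j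
  have h2 : MeasurePreserving (Prod.snd : α × (Fin K → α) → (Fin K → α))
      (μ.prod (Measure.pi fun _ => μ)) (Measure.pi fun _ => μ) := by
    refine ⟨measurable_snd, ?_⟩
    simp [Measure.map_snd_prod]
  exact h2.comp h1

end aux

theorem iwae_monotone {α : Type*} [MeasurableSpace α]
    (μ : Measure α) [IsProbabilityMeasure μ]
    (w : α → ℝ) (hwpos : ∀ z, 0 < w z) (hwm : Measurable w) (hwint : Integrable w μ)
    (hint : ∀ K : ℕ, Integrable
      (fun z : Fin K → α => Real.log ((1 / (K : ℝ)) * ∑ k, w (z k)))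
      (Measure.pi fun _ => μ))
    (K : ℕ) (hK : 1 ≤ K) :
    ∫ z : Fin K → α, Real.log ((1 / (K : ℝ)) * ∑ k, w (z k))
        ∂(Measure.pi fun _ => μ)
      ≤ ∫ z : Fin (K + 1) → α, Real.log ((1 / ((K : ℝ) + 1)) * ∑ k, w (z k))
        ∂(Measure.pi fun _ => μ) := by
  haveI : Nonempty (Fin K) := Fin.pos_iff_nonempty.mp hK
  set g : (Fin K → α) → ℝ := fun y => Real.log ((1 / (K : ℝ)) * ∑ i, w (y i)) with hg
  set T : Fin (K + 1) → (Fin (K + 1) → α) → (Fin K → α) :=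
    fun j z i => z (j.succAbove i) with hT
  have hTmp : ∀ j, MeasurePreserving (T j)
      (Measure.pi fun _ : Fin (K + 1) => μ) (Measure.pi fun _ : Fin K => μ) :=
    fun j => drop_measurePreserving μ K j
  have hgm : Measurable g := by
    apply Measurable.log
    fun_prop
  -- integrability of each composed term
  have hcomp : ∀ j, Integrable (fun z : Fin (K + 1) → α => g (T j z))
      (Measure.pi fun _ => μ) := fun j =>
    ((hTmp j).integrable_comp hgm.aestronglyMeasurable).mpr (hint K)
  -- the averaged function
  set F : (Fin (K + 1) → α) → ℝ :=
    fun z => (1 / ((K : ℝ) + 1)) * ∑ j, g (T j z) with hF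
  have hFint : Integrable F (Measure.pi fun _ => μ) :=
    (integrable_finset_sum univ fun j _ => hcomp j).const_mul _
  -- ∫ F = L_K
  have hFeq : ∫ z, F z ∂(Measure.pi fun _ : Fin (K + 1) => μ)
      = ∫ y : Fin K → α, g y ∂(Measure.pi fun _ => μ) := by
    have heach : ∀ j, ∫ z, g (T j z) ∂(Measure.pi fun _ : Fin (K + 1) => μ)
        = ∫ y : Fin K → α, g y ∂(Measure.pi fun _ => μ) := by
      intro j
      rw [← (hTmp j).map_eq, integral_map (hTmp j).measurable.aemeasurable
        hgm.aestronglyMeasurable]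
    rw [hF]
    rw [integral_const_mul, integral_finset_sum univ fun j _ => hcomp j]
    simp only [heach]
    rw [Finset.sum_const, card_univ, Fintype.card_fin, nsmul_eq_mul]
    push_cast
    field_simp
  -- pointwise inequality
  have hpt : ∀ z : Fin (K + 1) → α,
      F z ≤ Real.log ((1 / ((K : ℝ) + 1)) * ∑ k, w (z k)) := by
    intro z
    set a : Fin (K + 1) → ℝ := fun j => (1 / (K : ℝ)) * ∑ i, w (z (j.succAbove i)) with ha
    have hK0 : (0 : ℝ) < K := by exact_mod_cast hK
    have hapos : ∀ j, 0 < a j := by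
      intro j
      exact mul_pos (by positivity) (Finset.sum_pos (fun i _ => hwpos _) univ_nonempty)
    -- sum identity : ∑ j, a j = ∑ k, w (z k)
    have hsum : ∑ j, a j = ∑ k, w (z k) := by
      have h1 : ∀ j : Fin (K + 1), ∑ i, w (z (j.succAbove i))
          = (∑ k, w (z k)) - w (z j) := by
        intro j
        have := Fin.sum_univ_succAbove (fun k => w (z k)) j
        linarith [this]
      simp only [ha, h1]
      rw [← Finset.mul_sum, Finset.sum_sub_distrib, Finset.sum_const, card_univ,
        Fintype.card_fin, nsmul_eq_mul]
      push_cast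
      field_simp
      ring
    -- Jensen
    have hjensen := (strictConcaveOn_log_Ioi.concaveOn).le_map_sum
      (t := univ) (w := fun _ : Fin (K + 1) => 1 / ((K : ℝ) + 1)) (p := a)
      (fun i _ => by positivity)
      (by rw [Finset.sum_const, card_univ, Fintype.card_fin, nsmul_eq_mul]; push_cast; field_simp)
      (fun i _ => hapos i)
    simp only [smul_eq_mul] at hjensen
    calc F z = ∑ j, (1 / ((K : ℝ) + 1)) * Real.log (a j) := by
          simp only [hF, hg, ha, hT]
          rw [Finset.mul_sum]
      _ ≤ Real.log (∑ j, (1 / ((K : ℝ) + 1)) * a j) := hjensen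
      _ = Real.log ((1 / ((K : ℝ) + 1)) * ∑ k, w (z k)) := by
          rw [← Finset.mul_sum, hsum]
  calc ∫ z : Fin K → α, Real.log ((1 / (K : ℝ)) * ∑ k, w (z k))
        ∂(Measure.pi fun _ => μ)
      = ∫ z, F z ∂(Measure.pi fun _ : Fin (K + 1) => μ) := hFeq.symm
    _ ≤ ∫ z : Fin (K + 1) → α, Real.log ((1 / ((K : ℝ) + 1)) * ∑ k, w (z k))
        ∂(Measure.pi fun _ => μ) := by
        refine integral_mono hFint ?_ hpt
        have := hint (K + 1)
        push_cast at this
        exact this
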